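/- Let a > 0 and let f : ℝ → ℝ be twice differentiable with f''(x) = 8π(1 − exp(f(x))) for all x ∈ ℝ and f(x + a) = f(x) for all x ∈ ℝ. Let E = (f'(0))²/2 + 8π(exp(f(0)) − f(0) − 1) be the energy of f. Then (1/(4πa)) ∫₀^a f(x) dx = −E/(32π²) + (1/(64π²a)) ∫₀^a (f'(x))² dx. -/

import Mathlib

open Real intervalIntegral

/-- For a periodic solution (period `a > 0`) of `f'' = 8π(1 − e^f)` with
energy `E = (f'(0))²/2 + 8π(e^{f(0)} − f(0) − 1)`, the identity
`(1/(4πa)) ∫₀^a f = −E/(32π²) + (1/(64π²a)) ∫₀^a (f')²` holds. -/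
theorem average_f_eq_energy_action_identity
    (a : ℝ) (ha : 0 < a)
    (f f' : ℝ → ℝ)
    (hf : ∀ x, HasDerivAt f (f' x) x)
    (hf' : ∀ x, HasDerivAt f' (8 * π * (1 - Real.exp (f x))) x)
    (hper : ∀ x, f (x + a) = f x)
    (E : ℝ)
    (hE : E = (f' 0) ^ 2 / 2 + 8 * π * (Real.exp (f 0) - f 0 - 1)) :
    (1 / (4 * π * a)) * ∫ x in (0:ℝ)..a, f x
      = -E / (32 * π ^ 2) + (1 / (64 * π ^ 2 * a)) * ∫ x in (0:ℝ)..a, (f' x) ^ 2 := by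
  have hπ : (0:ℝ) < π := Real.pi_pos
  have hcf : Continuous f := continuous_iff_continuousAt.2 fun x => (hf x).continuousAt
  have hcf' : Continuous f' := continuous_iff_continuousAt.2 fun x => (hf' x).continuousAt
  -- f' is periodic
  have hper' : ∀ x, f' (x + a) = f' x := by
    intro x
    have h1 : HasDerivAt (fun y => f (y + a)) (f' (x + a)) x := by
      have := (hf (x + a)).comp x ((hasDerivAt_id x).add_const a)
      simpa [Function.comp_def] using this
    have h2 : HasDerivAt (fun y => f (y + a)) (f' x) x := by
      have hfun : (fun y => f (y + a)) = f := funext hper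
      rw [hfun]; exact hf x
    exact h1.unique h2
  -- the energy is constant
  have hconst : ∀ x, (f' x) ^ 2 / 2 + 8 * π * (Real.exp (f x) - f x - 1) = E := by
    set g : ℝ → ℝ := fun x => (f' x) ^ 2 / 2 + 8 * π * (Real.exp (f x) - f x - 1) with hg
    have hgd : ∀ x, HasDerivAt g 0 x := by
      intro x
      have h1 : HasDerivAt (fun x => (f' x) ^ 2 / 2)
          (2 * f' x ^ 1 * (8 * π * (1 - Real.exp (f x))) / 2) x :=
        ((hf' x).pow 2).div_const 2
      have he : HasDerivAt (fun x => Real.exp (f x)) (Real.exp (f x) * f' x) x :=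
        (Real.hasDerivAt_exp (f x)).comp x (hf x)
      have h2 : HasDerivAt (fun x => 8 * π * (Real.exp (f x) - f x - 1))
          (8 * π * (Real.exp (f x) * f' x - f' x)) x := by
        have := (((he.sub (hf x)).sub_const 1).const_mul (8 * π))
        simpa using this
      have := h1.add h2
      refine this.congr_deriv ?_
      ring
    have hcst : ∀ x, g x = g 0 := by
      have hdiff : Differentiable ℝ g := fun y => (hgd y).differentiableAt
      have hder : ∀ y, deriv g y = 0 := fun y => (hgd y).deriv
      intro x
      exact is_const_of_deriv_eq_zero hdiff hder x 0
    intro x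
    rw [hE]
    exact hcst x
  -- integrability
  have hintf : IntervalIntegrable f MeasureTheory.volume 0 a := hcf.intervalIntegrable 0 a
  have hint1 : IntervalIntegrable (fun x => (f' x) ^ 2) MeasureTheory.volume 0 a :=
    (hcf'.pow 2).intervalIntegrable 0 a
  have hce : Continuous (fun x => Real.exp (f x)) := Real.continuous_exp.comp hcf
  have hinte : IntervalIntegrable (fun x => Real.exp (f x)) MeasureTheory.volume 0 a :=
    hce.intervalIntegrable 0 a
  -- FTC for f'' gives ∫ exp f = a
  have hfa : f' a = f' 0 := by simpa using hper' 0
  have hftc : ∫ x in (0:ℝ)..a, 8 * π * (1 - Real.exp (f x)) = 0 := by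
    rw [intervalIntegral.integral_eq_sub_of_hasDerivAt (fun x _ => hf' x)
      (((continuous_const.mul (continuous_const.sub hce))).intervalIntegrable 0 a)]
    rw [hfa]; ring
  have hIe : (∫ x in (0:ℝ)..a, Real.exp (f x)) = a := by
    have : ∫ x in (0:ℝ)..a, 8 * π * (1 - Real.exp (f x))
        = 8 * π * (a - ∫ x in (0:ℝ)..a, Real.exp (f x)) := by
      rw [intervalIntegral.integral_const_mul,
        intervalIntegral.integral_sub intervalIntegrable_const hinte]
      simp
    rw [this] at hftc
    have h8π : (8 * π) ≠ 0 := by positivity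
    have := (mul_eq_zero.1 hftc).resolve_left h8π
    linarith
  -- integrate the constant energy
  have hkey : (∫ x in (0:ℝ)..a, (f' x) ^ 2) / 2 - 8 * π * (∫ x in (0:ℝ)..a, f x) = E * a := by
    have h1 : ∫ x in (0:ℝ)..a, ((f' x) ^ 2 / 2 + 8 * π * (Real.exp (f x) - f x - 1))
        = ∫ x in (0:ℝ)..a, E := by
      apply intervalIntegral.integral_congr
      intro x _
      exact hconst x
    rw [intervalIntegral.integral_const] at h1
    have h2 : ∫ x in (0:ℝ)..a, ((f' x) ^ 2 / 2 + 8 * π * (Real.exp (f x) - f x - 1))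
        = (∫ x in (0:ℝ)..a, (f' x) ^ 2) / 2
          + 8 * π * ((∫ x in (0:ℝ)..a, Real.exp (f x)) - (∫ x in (0:ℝ)..a, f x) - a) := by
      rw [intervalIntegral.integral_add (hint1.div_const 2)
          ((((hinte.sub hintf).sub intervalIntegrable_const)).const_mul (8 * π)),
        intervalIntegral.integral_div, intervalIntegral.integral_const_mul,
        intervalIntegral.integral_sub (hinte.sub hintf) intervalIntegrable_const,
        intervalIntegral.integral_sub hinte hintf]
      simp
    rw [h2, hIe] at h1
    have : a - 0 = a := by ring
    rw [this, smul_eq_mul] at h1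
    linarith [h1]
  -- conclude by algebra
  have hane : a ≠ 0 := ne_of_gt ha
  have hπne : π ≠ 0 := ne_of_gt hπ
  field_simp
  linear_combination (-256) * hkey
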